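/- Let (X,C,R) be a chemical reaction network whose graph of complexes is the chain with vertex set C = {1,…,c} and arc set R = {(i, i−1) : 2 ≤ i ≤ c} ∪ {(i, i+1) : 2 ≤ i ≤ c−1}, and whose deficiency satisfies δ = 1. Let h ∈ ℝ^c be a fixed vector with 0 ≠ h ∈ ker B ∩ ran I_κ and ∑_{i=2}^c h_i ≤ 0. Then there exists κ : R → ℝ_{>0} such that E^κ_+ ≠ ∅ if and only if ∑_{i=2}^c h_i < 0. -/
import Mathlib


open Finset

/-- The matrix `I_κ ∈ ℝ^{c×c}` with `(I_κ)_{ji} = κ_{ij}` for `j ≠ i` and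
`(I_κ)_{ii} = −∑_{k≠i} κ_{ik}`. -/
noncomputable def Ikappa {c : ℕ} (κ : Fin c → Fin c → ℝ) : Matrix (Fin c) (Fin c) ℝ :=
  Matrix.of fun j i => if j = i then -∑ k ∈ Finset.univ.erase i, κ i k else κ i j

/-- `κ` is (the extension by zero of) a family of positive rate coefficients on `R`. -/
def ValidK {c : ℕ} (R : Finset (Fin c × Fin c)) (κ : Fin c → Fin c → ℝ) : Prop :=
  (∀ p ∈ R, 0 < κ p.1 p.2) ∧ ∀ p : Fin c × Fin c, p ∉ R → κ p.1 p.2 = 0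

/-- The monomial map `Θ : ℝ^n_{>0} → ℝ^c`, `Θ(x)_i = ∏_s x_s^{B_{si}}`. -/
noncomputable def Theta {n c : ℕ} (B : Matrix (Fin n) (Fin c) ℕ) (x : Fin n → ℝ) :
    Fin c → ℝ :=
  fun i => ∏ s, x s ^ B s i

/-- The set of positive steady states `E^κ_+` is nonempty. -/
def EposNonempty {n c : ℕ} (B : Matrix (Fin n) (Fin c) ℕ) (κ : Fin c → Fin c → ℝ) : Prop :=
  ∃ x : Fin n → ℝ, (∀ s, 0 < x s) ∧
    (B.map (Nat.cast : ℕ → ℝ)).mulVec ((Ikappa κ).mulVec (Theta B x)) = 0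

/-- The deficiency `δ = dim(ker B ∩ ran I_κ)` equals one. -/
def DeficiencyOneAt {n c : ℕ} (B : Matrix (Fin n) (Fin c) ℕ)
    (κ : Fin c → Fin c → ℝ) : Prop :=
  Module.finrank ℝ
    ↥(LinearMap.ker (Matrix.mulVecLin (B.map (Nat.cast : ℕ → ℝ))) ⊓
      LinearMap.range (Matrix.mulVecLin (Ikappa κ))) = 1

/-- The graph of complexes of the "chain" network: complexes `C_1, …, C_c` are represented
by `0, …, c-1 : Fin c`; the arcs are `(i, i−1)` for `2 ≤ i ≤ c` and `(i, i+1)` for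
`2 ≤ i ≤ c−1` (in the 1-based labelling of the paper). -/
def chainR (c : ℕ) : Finset (Fin c × Fin c) :=
  Finset.univ.filter
    (fun p => 1 ≤ p.1.val ∧ (p.1.val = p.2.val + 1 ∨ p.2.val = p.1.val + 1))





lemma Ikappa_col_sum {c : ℕ} (κ : Fin c → Fin c → ℝ) (i : Fin c) :
    ∑ j, Ikappa κ j i = 0 := by
  rw [← Finset.add_sum_erase _ _ (Finset.mem_univ i)]
  have h1 : Ikappa κ i i = -∑ k ∈ Finset.univ.erase i, κ i k := by
    simp [Ikappa]
  have h2 : ∑ j ∈ Finset.univ.erase i, Ikappa κ j i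
      = ∑ j ∈ Finset.univ.erase i, κ i j :=
    Finset.sum_congr rfl fun j hj => if_neg (Finset.ne_of_mem_erase hj)
  rw [h1, h2]; ring

lemma Ikappa_mulVec_sum {c : ℕ} (κ : Fin c → Fin c → ℝ) (v : Fin c → ℝ) :
    ∑ j, (Ikappa κ).mulVec v j = 0 := by
  simp only [Matrix.mulVec, dotProduct]
  rw [Finset.sum_comm]
  apply Finset.sum_eq_zero
  intro i _
  rw [← Finset.sum_mul, Ikappa_col_sum, zero_mul]

noncomputable def pS {c : ℕ} (h : Fin c → ℝ) (t : ℕ) : ℝ :=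
  ∑ k ∈ Finset.univ.filter (fun k : Fin c => k.val ≤ t), h k

/-- The rate coefficients used in the "if" direction. -/
noncomputable def chainK {c : ℕ} (h : Fin c → ℝ) (μ : ℝ) : Fin c → Fin c → ℝ :=
  fun i j => if i.val = j.val + 1 then (if 2 ≤ i.val then 1 else 0) + μ * pS h j.val
    else if j.val = i.val + 1 ∧ 1 ≤ i.val then 1 else 0

lemma chainR_mem {c : ℕ} (p : Fin c × Fin c) :
    p ∈ chainR c ↔ 1 ≤ p.1.val ∧ (p.1.val = p.2.val + 1 ∨ p.2.val = p.1.val + 1) := by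
  simp [chainR]

lemma chainK_valid {c : ℕ} (h : Fin c → ℝ) (μ : ℝ) (hμ : 0 < μ)
    (hb : ∀ t, μ * |pS h t| < 1) (h0 : 0 < pS h 0) :
    ValidK (chainR c) (chainK h μ) := by
  constructor
  · rintro ⟨i, j⟩ hp
    simp only [chainR_mem] at hp
    simp only [chainK]
    obtain ⟨h1, h2 | h2⟩ := hp
    · rw [if_pos h2]
      rcases Nat.lt_or_ge i.val 2 with hi | hi
      · have hj : j.val = 0 := by omega
        rw [if_neg (by omega), hj]
        positivity
      · rw [if_pos hi]
        have h3 : μ * -(pS h j.val) ≤ μ * |pS h j.val| :=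
          mul_le_mul_of_nonneg_left (neg_le_abs _) hμ.le
        rw [mul_neg] at h3
        linarith [hb j.val]
    · rw [if_neg (by omega), if_pos ⟨h2, h1⟩]
      norm_num
  · rintro ⟨i, j⟩ hp
    simp only [chainK]
    by_cases h1 : i.val = j.val + 1
    · exact absurd ((chainR_mem (i, j)).mpr ⟨show 1 ≤ i.val by omega, Or.inl h1⟩) hp
    · rw [if_neg h1]
      by_cases h2 : j.val = i.val + 1 ∧ 1 ≤ i.val
      · exact absurd ((chainR_mem (i, j)).mpr ⟨h2.2, Or.inr h2.1⟩) hp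
      · rw [if_neg h2]

lemma sum_ite_val {c : ℕ} (f : Fin c → ℝ) (t : ℕ) :
    ∑ i : Fin c, (if i.val = t then f i else 0) =
      if ht : t < c then f ⟨t, ht⟩ else 0 := by
  split_ifs with ht
  · rw [Finset.sum_eq_single_of_mem ⟨t, ht⟩ (Finset.mem_univ _)]
    · simp
    · intro b _ hb
      rw [if_neg]
      simpa [Fin.ext_iff] using hb
  · exact Finset.sum_eq_zero fun i _ => if_neg (by omega)


lemma pS_eq {c : ℕ} (h : Fin c → ℝ) (t : ℕ) :
    pS h t = ∑ k : Fin c, (if k.val ≤ t then h k else 0) := by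
  rw [pS, Finset.sum_filter]

lemma pS_zero {c : ℕ} (h : Fin c → ℝ) (hc : 0 < c) : pS h 0 = h ⟨0, hc⟩ := by
  rw [pS_eq]
  have : ∀ k : Fin c, (if k.val ≤ 0 then h k else 0) = (if k.val = 0 then h k else 0) := by
    intro k; congr 1; simp [Nat.le_zero]
  rw [Finset.sum_congr rfl fun k _ => this k, sum_ite_val, dif_pos hc]

lemma pS_diff {c : ℕ} (h : Fin c → ℝ) (t : ℕ) (ht1 : 1 ≤ t) (htc : t < c) :
    pS h t = pS h (t - 1) + h ⟨t, htc⟩ := by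
  have : pS h t - pS h (t-1) = h ⟨t, htc⟩ := by
    rw [pS_eq, pS_eq, ← Finset.sum_sub_distrib]
    have : ∀ k : Fin c, ((if k.val ≤ t then h k else 0) - (if k.val ≤ t - 1 then h k else 0))
        = (if k.val = t then h k else 0) := by
      intro k
      rcases Nat.lt_trichotomy k.val t with hk | hk | hk
      · rw [if_pos (by omega), if_pos (by omega), if_neg (by omega), sub_self]
      · rw [if_pos (by omega), if_neg (by omega), if_pos hk, sub_zero]
      · rw [if_neg (by omega), if_neg (by omega), if_neg (by omega), sub_zero]
    rw [Finset.sum_congr rfl fun k _ => this k, sum_ite_val, dif_pos htc]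
  linarith

lemma pS_last {c : ℕ} (h : Fin c → ℝ) (hc : 0 < c) : pS h (c - 1) = ∑ k, h k := by
  rw [pS]
  congr 1
  rw [Finset.filter_true_of_mem]
  intro k _; omega

lemma pS_bound {c : ℕ} (h : Fin c → ℝ) (t : ℕ) : |pS h t| ≤ ∑ k, |h k| := by
  rw [pS]
  refine (Finset.abs_sum_le_sum_abs _ _).trans ?_
  exact Finset.sum_le_sum_of_subset_of_nonneg (Finset.filter_subset _ _)
    (fun k _ _ => abs_nonneg _)

lemma sum_ite_const {c : ℕ} (v : ℝ) (t : ℕ) :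
    ∑ i : Fin c, (if i.val = t then v else 0) = if t < c then v else 0 := by
  rw [sum_ite_val (fun _ => v) t]
  split_ifs <;> rfl

lemma chainK_mulVec {c : ℕ} (hc : 2 ≤ c) (h : Fin c → ℝ) (μ : ℝ)
    (hsum : ∑ k, h k = 0) :
    (Ikappa (chainK h μ)).mulVec (fun _ => 1) = μ • h := by
  funext j
  set κ := chainK h μ with hκ
  have hκjj : κ j j = 0 := by
    simp only [hκ, chainK]
    rw [if_neg (by omega), if_neg (by omega)]
  have step1 : (Ikappa κ).mulVec (fun _ => 1) j = ∑ i, Ikappa κ j i := by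
    simp [Matrix.mulVec, dotProduct]
  have step2 : ∑ i, Ikappa κ j i = (∑ i, κ i j) - (∑ k, κ j k) := by
    rw [← Finset.add_sum_erase _ _ (Finset.mem_univ j)]
    have e1 : Ikappa κ j j = -∑ k ∈ Finset.univ.erase j, κ j k := by simp [Ikappa]
    have e2 : ∑ i ∈ Finset.univ.erase j, Ikappa κ j i
        = ∑ i ∈ Finset.univ.erase j, κ i j :=
      Finset.sum_congr rfl fun i hi =>
        if_neg fun e => (Finset.ne_of_mem_erase hi) e.symm
    rw [e1, e2, Finset.sum_erase (f := fun i => κ i j) _ hκjj,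
      Finset.sum_erase (f := fun k => κ j k) _ hκjj]
    ring
  have hin : ∑ i, κ i j
      = (if j.val + 1 < c then ((if 1 ≤ j.val then 1 else 0) + μ * pS h j.val) else 0)
        + (if 2 ≤ j.val then 1 else 0) := by
    have split : ∀ i : Fin c, κ i j
        = (if i.val = j.val + 1 then ((if 1 ≤ j.val then (1:ℝ) else 0) + μ * pS h j.val) else 0)
          + (if 2 ≤ j.val then (if i.val = j.val - 1 then (1:ℝ) else 0) else 0) := by
      intro i
      simp only [hκ, chainK]
      split_ifs <;> first
        | ring1
        | (exfalso; omega)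
    rw [Finset.sum_congr rfl fun i _ => split i, Finset.sum_add_distrib]
    congr 1
    · exact sum_ite_const _ _
    · by_cases h3 : 2 ≤ j.val
      · rw [if_pos h3,
          Finset.sum_congr rfl (fun i (_ : i ∈ Finset.univ) => if_pos h3),
          sum_ite_const, if_pos (show j.val - 1 < c by omega)]
      · rw [if_neg h3]
        exact Finset.sum_eq_zero fun i _ => if_neg h3
  have hout : ∑ k, κ j k
      = (if 1 ≤ j.val then ((if 2 ≤ j.val then 1 else 0) + μ * pS h (j.val - 1)) else 0)
        + (if 1 ≤ j.val then (if j.val + 1 < c then (1:ℝ) else 0) else 0) := by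
    have split : ∀ k : Fin c, κ j k
        = (if 1 ≤ j.val then
            (if k.val = j.val - 1 then
              ((if 2 ≤ j.val then (1:ℝ) else 0) + μ * pS h (j.val - 1)) else 0)
          else 0)
          + (if 1 ≤ j.val then (if k.val = j.val + 1 then (1:ℝ) else 0) else 0) := by
      intro k
      simp only [hκ, chainK]
      split_ifs <;> first
        | ring1
        | (exfalso; omega)
        | (rw [show (k.val : ℕ) = j.val - 1 by omega]; try ring1)
    rw [Finset.sum_congr rfl fun k _ => split k, Finset.sum_add_distrib]
    congr 1
    · by_cases h2 : 1 ≤ j.val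
      · rw [if_pos h2, Finset.sum_congr rfl (fun k (_ : k ∈ Finset.univ) => if_pos h2),
          sum_ite_const, if_pos (show j.val - 1 < c by omega)]
      · rw [if_neg h2]
        exact Finset.sum_eq_zero fun k _ => if_neg h2
    · by_cases h2 : 1 ≤ j.val
      · rw [if_pos h2, Finset.sum_congr rfl (fun k (_ : k ∈ Finset.univ) => if_pos h2),
          sum_ite_const]
      · rw [if_neg h2]
        exact Finset.sum_eq_zero fun k _ => if_neg h2
  rw [step1, step2, hin, hout, Pi.smul_apply, smul_eq_mul]
  by_cases hj0 : j.val = 0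
  · have c1 : j.val + 1 < c := by omega
    have c2 : ¬ 1 ≤ j.val := by omega
    have c3 : ¬ 2 ≤ j.val := by omega
    simp only [if_pos c1, if_neg c2, if_neg c3]
    have hz : pS h 0 = h j := by
      rw [pS_zero h (show 0 < c by omega)]
      congr 1
      exact Fin.ext hj0.symm
    rw [hj0, hz]
    ring
  · have hj1 : 1 ≤ j.val := by omega
    have hdiff : pS h j.val = pS h (j.val - 1) + h j := by
      have := pS_diff h j.val hj1 j.isLt
      rwa [show (⟨j.val, j.isLt⟩ : Fin c) = j from Fin.ext rfl] at this
    by_cases hjc : j.val + 1 < c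
    · simp only [if_pos hj1, if_pos hjc]
      rw [hdiff]; ring
    · simp only [if_neg hjc, if_pos hj1]
      have hlast : pS h j.val = 0 := by
        have hcc : j.val = c - 1 := by omega
        rw [hcc, pS_last h (by omega), hsum]
      have hps : pS h (j.val - 1) = -h j := by
        rw [hlast] at hdiff; linarith
      rw [hps]; ring

theorem stmt2 {n c : ℕ} (hc : 2 ≤ c)
    (B : Matrix (Fin n) (Fin c) ℕ)
    (hdef : ∀ κ : Fin c → Fin c → ℝ, ValidK (chainR c) κ → DeficiencyOneAt B κ)
    (h : Fin c → ℝ) (hh0 : h ≠ 0)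
    (hker : (B.map (Nat.cast : ℕ → ℝ)).mulVec h = 0)
    (hran : ∀ κ : Fin c → Fin c → ℝ, ValidK (chainR c) κ →
      ∃ v : Fin c → ℝ, (Ikappa κ).mulVec v = h)
    (hCpp : ∑ i ∈ Finset.univ.filter (fun i : Fin c => 1 ≤ i.val), h i ≤ 0) :
    (∃ κ : Fin c → Fin c → ℝ, ValidK (chainR c) κ ∧ EposNonempty B κ) ↔
      ∑ i ∈ Finset.univ.filter (fun i : Fin c => 1 ≤ i.val), h i < 0 := by
  haveI : NeZero c := ⟨by omega⟩
  have hz : (0 : Fin c).val = 0 := rfl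
  have ho : (⟨1, by omega⟩ : Fin c).val = 1 := rfl
  -- a canonical valid κ, to extract facts independent of κ
  have hκ0 : ValidK (chainR c) (fun i j => if (i, j) ∈ chainR c then (1:ℝ) else 0) := by
    constructor
    · intro p hp
      dsimp only
      split_ifs with hm
      · norm_num
      · exact absurd (show (p.1, p.2) ∈ chainR c from hp) hm
    · intro p hp
      dsimp only
      split_ifs with hm
      · exact absurd (show p ∈ chainR c from hm) hp
      · rfl
  obtain ⟨v0, hv0⟩ := hran _ hκ0
  have hsum : ∑ k, h k = 0 := by
    rw [← hv0]; exact Ikappa_mulVec_sum _ _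
  have hfilter : ∑ i ∈ Finset.univ.filter (fun i : Fin c => 1 ≤ i.val), h i
      = - h 0 := by
    have hset : Finset.univ.filter (fun i : Fin c => 1 ≤ i.val)
        = Finset.univ.erase (0 : Fin c) := by
      ext i
      simp only [Finset.mem_filter, Finset.mem_univ, true_and, Finset.mem_erase, and_true,
        ne_eq, Fin.ext_iff, hz]
      omega
    rw [hset, Finset.sum_erase_eq_sub (Finset.mem_univ (0 : Fin c)), hsum]
    ring
  constructor
  · rintro ⟨κ, hκv, x, hx, hst⟩
    -- positivity of Θ
    have hΘ : ∀ i, 0 < Theta B x i := fun i =>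
      Finset.prod_pos fun s _ => pow_pos (hx s) _
    set w := (Ikappa κ).mulVec (Theta B x) with hw
    -- w lies in (ker B) ⊓ (ran I_κ) = span {h}
    set K := LinearMap.ker (Matrix.mulVecLin (B.map (Nat.cast : ℕ → ℝ))) ⊓
      LinearMap.range (Matrix.mulVecLin (Ikappa κ)) with hK
    have hwK : w ∈ K := by
      refine ⟨?_, ⟨Theta B x, by simp [Matrix.mulVecLin_apply, hw]⟩⟩
      show (B.map (Nat.cast : ℕ → ℝ)).mulVecLin w = 0
      rw [Matrix.mulVecLin_apply]
      exact hst
    have hhK : h ∈ K := by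
      refine ⟨?_, ?_⟩
      · show (B.map (Nat.cast : ℕ → ℝ)).mulVecLin h = 0
        rw [Matrix.mulVecLin_apply]
        exact hker
      · obtain ⟨v, hv⟩ := hran κ hκv
        exact ⟨v, by simp [Matrix.mulVecLin_apply, hv]⟩
    have hrank : Module.finrank ℝ ↥K = 1 := hdef κ hκv
    have hspan : Submodule.span ℝ {h} = K := by
      apply Submodule.eq_of_le_of_finrank_le
        (Submodule.span_le.mpr (Set.singleton_subset_iff.mpr hhK))
      rw [hrank, finrank_span_singleton hh0]
    have hwspan : w ∈ Submodule.span ℝ ({h} : Set (Fin c → ℝ)) := hspan ▸ hwK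
    obtain ⟨a, ha⟩ := Submodule.mem_span_singleton.mp hwspan
    -- the 0-th coordinate of w is positive
    have hκnn : ∀ i j : Fin c, 0 ≤ κ i j := by
      intro i j
      by_cases hm : (i, j) ∈ chainR c
      · exact (hκv.1 _ hm).le
      · rw [hκv.2 _ hm]
    have hIzz : Ikappa κ 0 0 = 0 := by
      have hzero : ∀ k ∈ Finset.univ.erase (0 : Fin c), κ 0 k = 0 := by
        intro k _
        refine hκv.2 ((0 : Fin c), k) fun hm => ?_
        rw [chainR_mem] at hm
        have h1 := hm.1
        simp [hz] at h1
      simp only [Ikappa, Matrix.of_apply, if_pos rfl]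
      rw [Finset.sum_eq_zero hzero, neg_zero]
      simp
    have hwz : 0 < w 0 := by
      have hw0 : w 0 = ∑ i, Ikappa κ 0 i * Theta B x i := by
        simp [hw, Matrix.mulVec, dotProduct]
      rw [hw0]
      apply Finset.sum_pos'
      · intro i _
        by_cases hi : (0 : Fin c) = i
        · rw [← hi, hIzz, zero_mul]
        · have hent : Ikappa κ 0 i = κ i 0 := by
            simp only [Ikappa, Matrix.of_apply]
            rw [if_neg hi]
          rw [hent]
          exact mul_nonneg (hκnn i 0) (hΘ i).le
      · have hclt : (1 : ℕ) < c := by omega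
        refine ⟨⟨1, hclt⟩, Finset.mem_univ _, ?_⟩
        have hne : (0 : Fin c) ≠ ⟨1, hclt⟩ := by
          simp [Fin.ext_iff, hz]
        have hent : Ikappa κ 0 ⟨1, hclt⟩ = κ ⟨1, hclt⟩ 0 := by
          simp only [Ikappa, Matrix.of_apply]
          rw [if_neg hne]
        rw [hent]
        have hmem : ((⟨1, hclt⟩ : Fin c), (0 : Fin c)) ∈ chainR c := by
          rw [chainR_mem]
          exact ⟨le_refl 1, Or.inl (by simp [hz])⟩
        exact mul_pos (hκv.1 _ hmem) (hΘ _)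
    have hawz : a * h 0 > 0 := by
      have : w 0 = a * h 0 := by rw [← ha]; rfl
      linarith [hwz, this]
    have hh0nonneg : 0 ≤ h 0 := by
      rw [hfilter] at hCpp
      linarith
    have hh0pos : 0 < h 0 := by
      rcases lt_or_eq_of_le hh0nonneg with hp | hp
      · exact hp
      · rw [← hp] at hawz; nlinarith
    rw [hfilter]
    linarith
  · intro hlt
    have hh0pos : 0 < h 0 := by rw [hfilter] at hlt; linarith
    set M := ∑ k, |h k| with hM
    have hM0 : 0 ≤ M := Finset.sum_nonneg fun k _ => abs_nonneg _
    set μ := 1 / (1 + M) with hμdef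
    have hμ : 0 < μ := by positivity
    have hb : ∀ t, μ * |pS h t| < 1 := by
      intro t
      have h1 := pS_bound h t
      have h2 : μ * |pS h t| ≤ μ * M := mul_le_mul_of_nonneg_left h1 hμ.le
      have h3 : μ * M < 1 := by
        rw [hμdef, div_mul_eq_mul_div, one_mul, div_lt_one (by linarith)]
        linarith
      linarith
    have h0p : 0 < pS h 0 := by
      rw [pS_zero h (show 0 < c by omega)]
      exact hh0pos
    refine ⟨chainK h μ, chainK_valid h μ hμ hb h0p, fun _ => 1, fun s => one_pos, ?_⟩
    have hΘ1 : Theta B (fun _ => 1) = fun _ => (1:ℝ) := by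
      funext i; simp [Theta]
    rw [hΘ1, chainK_mulVec hc h μ hsum, Matrix.mulVec_smul, hker, smul_zero]
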